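/- With K_A ⊆ V_A, K_B ⊆ V_B, K_C ⊆ V_C as in the GPT setup, the maximal tensor product is associative: the canonical associativity isomorphism α : (V_A ⊗ V_B) ⊗ V_C ≅ V_A ⊗ (V_B ⊗ V_C) maps (K_A ⊗max K_B) ⊗max K_C onto K_A ⊗max (K_B ⊗max K_C), where the iterated maximal tensor products are formed using as effects on K_A ⊗max K_B (respectively on K_B ⊗max K_C) all linear functionals on V_A ⊗ V_B (respectively V_B ⊗ V_C) taking values in [0,1] on that set, with unit functional e_A ⊗ e_B (respectively e_B ⊗ e_C). -/

import Mathlib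

open TensorProduct

/-- The linear functional `f ⊗ g` on `V ⊗ W` induced by linear functionals `f, g`. -/
noncomputable def tensorFunctional {V W : Type*} [AddCommGroup V] [Module ℝ V]
    [AddCommGroup W] [Module ℝ W] (f : V →ₗ[ℝ] ℝ) (g : W →ₗ[ℝ] ℝ) :
    V ⊗[ℝ] W →ₗ[ℝ] ℝ :=
  TensorProduct.lift ((LinearMap.mul ℝ ℝ).compl₁₂ f g)

/-- The maximal tensor product of two state spaces with unit functionals `eK, eL`. -/
noncomputable def maxTensor {V W : Type*} [AddCommGroup V] [Module ℝ V]
    [AddCommGroup W] [Module ℝ W] (K : Set V) (L : Set W)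
    (eK : V →ₗ[ℝ] ℝ) (eL : W →ₗ[ℝ] ℝ) : Set (V ⊗[ℝ] W) :=
  {z | (∀ f : V →ₗ[ℝ] ℝ, ∀ g : W →ₗ[ℝ] ℝ, (∀ x ∈ K, 0 ≤ f x ∧ f x ≤ 1) →
        (∀ y ∈ L, 0 ≤ g y ∧ g y ≤ 1) → 0 ≤ tensorFunctional f g z) ∧
      tensorFunctional eK eL z = 1}

namespace MaxAux
variable {V W : Type*} [AddCommGroup V] [Module ℝ V] [AddCommGroup W] [Module ℝ W]

lemma tf_tmul (f : V →ₗ[ℝ] ℝ) (g : W →ₗ[ℝ] ℝ) (x : V) (y : W) :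
    tensorFunctional f g (x ⊗ₜ[ℝ] y) = f x * g y := by
  simp [tensorFunctional]

def IsEff (K : Set V) (f : V →ₗ[ℝ] ℝ) : Prop := ∀ x ∈ K, 0 ≤ f x ∧ f x ≤ 1

lemma isEff_unit {K : Set V} {e : V →ₗ[ℝ] ℝ} (he : ∀ x ∈ K, e x = 1) : IsEff K e :=
  fun x hx => by rw [he x hx]; norm_num

lemma isEff_sub {K : Set V} {e f : V →ₗ[ℝ] ℝ} (he : ∀ x ∈ K, e x = 1)
    (hf : IsEff K f) : IsEff K (e - f) := by
  intro x hx
  have h := hf x hx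
  simp only [LinearMap.sub_apply, he x hx]
  constructor <;> linarith [h.1, h.2]

lemma tf_sub_left (f f' g : _) (w : V ⊗[ℝ] W) :
    tensorFunctional (f - f') g w = tensorFunctional f g w - tensorFunctional f' g w := by
  have : tensorFunctional (f - f') g = tensorFunctional f g - tensorFunctional f' g := by
    apply TensorProduct.ext'
    intro x y
    simp [tf_tmul]; ring
  rw [this]; rfl

lemma tf_sub_right (f : V →ₗ[ℝ] ℝ) (g g' : W →ₗ[ℝ] ℝ) (w : V ⊗[ℝ] W) :
    tensorFunctional f (g - g') w = tensorFunctional f g w - tensorFunctional f g' w := by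
  have : tensorFunctional f (g - g') = tensorFunctional f g - tensorFunctional f g' := by
    apply TensorProduct.ext'
    intro x y
    simp [tf_tmul]; ring
  rw [this]; rfl

lemma tf_combo (a b : ℝ) (φ e : V →ₗ[ℝ] ℝ) (ψ : W →ₗ[ℝ] ℝ) (w : V ⊗[ℝ] W) :
    tensorFunctional (a • φ + b • e) (ψ) w = a * tensorFunctional φ ψ w + b * tensorFunctional e ψ w := by
  have : tensorFunctional (a • φ + b • e) ψ = a • tensorFunctional φ ψ + b • tensorFunctional e ψ := by
    apply TensorProduct.ext'
    intro x y
    simp [tf_tmul]; ring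
  rw [this]; rfl

lemma tf_combo_right (a b : ℝ) (φ : V →ₗ[ℝ] ℝ) (ψ : W →ₗ[ℝ] ℝ) (w : V ⊗[ℝ] W) :
    tensorFunctional φ (a • ψ + b • f) w = a * tensorFunctional φ ψ w + b * tensorFunctional φ f w := by
  have : tensorFunctional φ (a • ψ + b • f) = a • tensorFunctional φ ψ + b • tensorFunctional φ f := by
    apply TensorProduct.ext'
    intro x y
    simp [tf_tmul]; ring
  rw [this]; rfl

noncomputable def ctR (g : W →ₗ[ℝ] ℝ) : V ⊗[ℝ] W →ₗ[ℝ] V :=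
  TensorProduct.lift (((LinearMap.lsmul ℝ V).comp g).flip)

lemma tf_ctR (F : V →ₗ[ℝ] ℝ) (g : W →ₗ[ℝ] ℝ) (z : V ⊗[ℝ] W) :
    tensorFunctional F g z = F (ctR g z) := by
  have : tensorFunctional F g = F ∘ₗ ctR g := by
    apply TensorProduct.ext'
    intro x y
    simp [tf_tmul, ctR]; ring
  rw [this]; rfl

noncomputable def ctL (f : V →ₗ[ℝ] ℝ) : V ⊗[ℝ] W →ₗ[ℝ] W :=
  TensorProduct.lift ((LinearMap.lsmul ℝ W).comp f)

lemma tf_ctL (f : V →ₗ[ℝ] ℝ) (G : W →ₗ[ℝ] ℝ) (z : V ⊗[ℝ] W) :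
    tensorFunctional f G z = G (ctL f z) := by
  have : tensorFunctional f G = G ∘ₗ ctL f := by
    apply TensorProduct.ext'
    intro x y
    simp [tf_tmul, ctL]
  rw [this]; rfl

lemma eq_zero_of_forall_tf (w : V ⊗[ℝ] W)
    (h : ∀ (f : V →ₗ[ℝ] ℝ) (g : W →ₗ[ℝ] ℝ), tensorFunctional f g w = 0) : w = 0 := by
  let bV := Module.Basis.ofVectorSpace ℝ V
  let bW := Module.Basis.ofVectorSpace ℝ W
  let b := bV.tensorProduct bW
  have key : ∀ i j, b.repr w (i, j) = tensorFunctional (bV.coord i) (bW.coord j) w := by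
    intro i j
    have heq : (Finsupp.lapply (i, j) : _ →ₗ[ℝ] ℝ) ∘ₗ (b.repr : V ⊗[ℝ] W ≃ₗ[ℝ] _).toLinearMap
        = tensorFunctional (bV.coord i) (bW.coord j) := by
      apply TensorProduct.ext'
      intro x y
      simp [b, tf_tmul, Module.Basis.tensorProduct_repr_tmul_apply, Module.Basis.coord_apply]
      ring
    exact (LinearMap.congr_fun heq w)
  have hz : b.repr w = 0 := by
    ext p
    obtain ⟨i, j⟩ := p
    simp [key i j, h]
  exact b.repr.map_eq_zero_iff.mp hz

lemma exists_eff_combo {V : Type*} [NormedAddCommGroup V] [NormedSpace ℝ V]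
    [FiniteDimensional ℝ V] {K : Set V} (hK : IsCompact K) {e : V →ₗ[ℝ] ℝ}
    (he : ∀ x ∈ K, e x = 1) (φ : V →ₗ[ℝ] ℝ) :
    ∃ ε : ℝ, 0 < ε ∧ IsEff K (ε • φ + (1 / 2 : ℝ) • e) := by
  obtain ⟨M0, hM0⟩ := hK.isBounded.exists_norm_le
  set φ' := LinearMap.toContinuousLinearMap φ with hφ'
  set M : ℝ := |‖φ'‖ * M0| + 1 with hM
  have hMpos : 0 < M := by positivity
  have hb : ∀ x ∈ K, |φ x| ≤ M := by
    intro x hx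
    have h1 : |φ x| = ‖φ' x‖ := rfl
    have h2 : ‖φ' x‖ ≤ ‖φ'‖ * ‖x‖ := φ'.le_opNorm x
    have h3 : ‖φ'‖ * ‖x‖ ≤ ‖φ'‖ * M0 :=
      mul_le_mul_of_nonneg_left (hM0 x hx) (norm_nonneg _)
    have h4 : ‖φ'‖ * M0 ≤ |‖φ'‖ * M0| := le_abs_self _
    rw [h1]; linarith
  refine ⟨1 / (2 * M), by positivity, ?_⟩
  intro x hx
  have hbx := hb x hx
  have habs : |1 / (2 * M) * φ x| ≤ 1 / 2 := by
    rw [abs_mul, abs_of_pos (by positivity : (0:ℝ) < 1 / (2 * M))]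
    rw [div_mul_eq_mul_div, one_mul, div_le_div_iff₀ (by positivity) (by norm_num)]
    nlinarith [abs_nonneg (φ x)]
  have h5 := abs_le.mp habs
  simp only [LinearMap.add_apply, LinearMap.smul_apply, smul_eq_mul, he x hx, mul_one]
  constructor <;> linarith [h5.1, h5.2]

lemma eq_zero_of_eff {V W : Type*} [NormedAddCommGroup V] [NormedSpace ℝ V]
    [FiniteDimensional ℝ V] [NormedAddCommGroup W] [NormedSpace ℝ W]
    [FiniteDimensional ℝ W] {K : Set V} {L : Set W}
    (hK : IsCompact K) (hL : IsCompact L) {eK : V →ₗ[ℝ] ℝ} {eL : W →ₗ[ℝ] ℝ}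
    (heK : ∀ x ∈ K, eK x = 1) (heL : ∀ y ∈ L, eL y = 1) (w : V ⊗[ℝ] W)
    (h : ∀ f g, IsEff K f → IsEff L g → tensorFunctional f g w = 0) : w = 0 := by
  apply eq_zero_of_forall_tf
  intro φ ψ
  obtain ⟨ε, hε, hEff⟩ := exists_eff_combo hK heK φ
  obtain ⟨ε', hε', hEff'⟩ := exists_eff_combo hL heL ψ
  have h00 := h eK eL (isEff_unit heK) (isEff_unit heL)
  have h10 := h _ eL hEff (isEff_unit heL)
  have h01 := h eK _ (isEff_unit heK) hEff'
  have h11 := h _ _ hEff hEff'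
  rw [tf_combo] at h10 h11
  rw [tf_combo_right] at h01
  rw [tf_combo_right, tf_combo_right] at h11
  -- h10 : ε * T φ eL + 1/2 * T eK eL = 0
  have hTφeL : tensorFunctional φ eL w = 0 := by
    have : ε * tensorFunctional φ eL w = 0 := by linarith
    exact (mul_eq_zero.mp this).resolve_left (ne_of_gt hε)
  have hTeKψ : tensorFunctional eK ψ w = 0 := by
    have : ε' * tensorFunctional eK ψ w = 0 := by linarith
    exact (mul_eq_zero.mp this).resolve_left (ne_of_gt hε')
  have : ε * (ε' * tensorFunctional φ ψ w) = 0 := by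
    rw [hTφeL, hTeKψ, h00] at h11
    linear_combination h11
  have := (mul_eq_zero.mp this).resolve_left (ne_of_gt hε)
  exact (mul_eq_zero.mp this).resolve_left (ne_of_gt hε')

/-- products of effects are effects on the maximal tensor product -/
lemma tf_eff {V W : Type*} [AddCommGroup V] [Module ℝ V] [AddCommGroup W] [Module ℝ W]
    {K : Set V} {L : Set W} {eK : V →ₗ[ℝ] ℝ} {eL : W →ₗ[ℝ] ℝ} {f g}
    (heK : ∀ x ∈ K, eK x = 1) (heL : ∀ y ∈ L, eL y = 1)
    (hf : IsEff K f) (hg : IsEff L g) :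
    IsEff (maxTensor K L eK eL) (tensorFunctional f g) := by
  intro z hz
  refine ⟨hz.1 f g hf hg, ?_⟩
  have h1 : 0 ≤ tensorFunctional (eK - f) g z := hz.1 _ _ (isEff_sub heK hf) hg
  have h2 : 0 ≤ tensorFunctional eK (eL - g) z :=
    hz.1 _ _ (isEff_unit heK) (isEff_sub heL hg)
  rw [tf_sub_left] at h1
  rw [tf_sub_right] at h2
  have h3 := hz.2
  linarith

/-- characterization of the left-iterated maximal tensor product -/
lemma memL_iff {VA VB VC : Type*}
    [NormedAddCommGroup VA] [NormedSpace ℝ VA] [FiniteDimensional ℝ VA]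
    [NormedAddCommGroup VB] [NormedSpace ℝ VB] [FiniteDimensional ℝ VB]
    [AddCommGroup VC] [Module ℝ VC]
    {KA : Set VA} {KB : Set VB} {KC : Set VC}
    (hcompA : IsCompact KA) (hcompB : IsCompact KB)
    {eA : VA →ₗ[ℝ] ℝ} {eB : VB →ₗ[ℝ] ℝ} {eC : VC →ₗ[ℝ] ℝ}
    (heA : ∀ x ∈ KA, eA x = 1) (heB : ∀ y ∈ KB, eB y = 1) (heC : ∀ w ∈ KC, eC w = 1)
    (z : (VA ⊗[ℝ] VB) ⊗[ℝ] VC) :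
    z ∈ maxTensor (maxTensor KA KB eA eB) KC (tensorFunctional eA eB) eC ↔
      (∀ f g h, IsEff KA f → IsEff KB g → IsEff KC h →
        0 ≤ tensorFunctional (tensorFunctional f g) h z) ∧
      tensorFunctional (tensorFunctional eA eB) eC z = 1 := by
  constructor
  · rintro ⟨hpos, hunit⟩
    exact ⟨fun f g h hf hg hh => hpos _ _ (tf_eff heA heB hf hg) hh, hunit⟩
  · rintro ⟨hpos, hunit⟩
    refine ⟨?_, hunit⟩
    intro F g hF hg
    set w : VA ⊗[ℝ] VB := ctR g z with hw
    rw [tf_ctR]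
    have hwpos : ∀ f g', IsEff KA f → IsEff KB g' → 0 ≤ tensorFunctional f g' w := by
      intro f g' hf hg'
      rw [hw, ← tf_ctR]
      exact hpos f g' g hf hg' hg
    set t : ℝ := tensorFunctional eA eB w with ht
    have htpos : 0 ≤ t := hwpos _ _ (isEff_unit heA) (isEff_unit heB)
    rcases eq_or_lt_of_le htpos with hteq | htlt
    · -- t = 0 : all effect pairings vanish, hence w = 0
      have hall : ∀ f g', IsEff KA f → IsEff KB g' → tensorFunctional f g' w = 0 := by
        intro f g' hf hg'
        have h1 : 0 ≤ tensorFunctional f (eB - g') w :=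
          hwpos _ _ hf (isEff_sub heB hg')
        have h2 : 0 ≤ tensorFunctional (eA - f) eB w :=
          hwpos _ _ (isEff_sub heA hf) (isEff_unit heB)
        have h3 : 0 ≤ tensorFunctional f g' w := hwpos _ _ hf hg'
        rw [tf_sub_right] at h1
        rw [tf_sub_left] at h2
        linarith [hteq.symm ▸ (rfl : t = t)]
      have hw0 : w = 0 := eq_zero_of_eff hcompA hcompB heA heB w hall
      show 0 ≤ F w
      rw [hw0, map_zero]
    · -- t > 0 : rescale into the maximal tensor product
      have hmem : t⁻¹ • w ∈ maxTensor KA KB eA eB := by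
        constructor
        · intro f g' hf hg'
          rw [map_smul, smul_eq_mul]
          exact mul_nonneg (inv_nonneg.mpr htpos) (hwpos f g' hf hg')
        · rw [map_smul, smul_eq_mul, ← ht, inv_mul_cancel₀ (ne_of_gt htlt)]
      have h5 := (hF _ hmem).1
      rw [map_smul, smul_eq_mul] at h5
      show 0 ≤ F w
      have h6 : 0 ≤ t * (t⁻¹ * F w) := mul_nonneg htlt.le h5
      rwa [← mul_assoc, mul_inv_cancel₀ (ne_of_gt htlt), one_mul] at h6

/-- characterization of the right-iterated maximal tensor product -/
lemma memR_iff {VA VB VC : Type*}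
    [AddCommGroup VA] [Module ℝ VA]
    [NormedAddCommGroup VB] [NormedSpace ℝ VB] [FiniteDimensional ℝ VB]
    [NormedAddCommGroup VC] [NormedSpace ℝ VC] [FiniteDimensional ℝ VC]
    {KA : Set VA} {KB : Set VB} {KC : Set VC}
    (hcompB : IsCompact KB) (hcompC : IsCompact KC)
    {eA : VA →ₗ[ℝ] ℝ} {eB : VB →ₗ[ℝ] ℝ} {eC : VC →ₗ[ℝ] ℝ}
    (heA : ∀ x ∈ KA, eA x = 1) (heB : ∀ y ∈ KB, eB y = 1) (heC : ∀ w ∈ KC, eC w = 1)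
    (z : VA ⊗[ℝ] (VB ⊗[ℝ] VC)) :
    z ∈ maxTensor KA (maxTensor KB KC eB eC) eA (tensorFunctional eB eC) ↔
      (∀ f g h, IsEff KA f → IsEff KB g → IsEff KC h →
        0 ≤ tensorFunctional f (tensorFunctional g h) z) ∧
      tensorFunctional eA (tensorFunctional eB eC) z = 1 := by
  constructor
  · rintro ⟨hpos, hunit⟩
    exact ⟨fun f g h hf hg hh => hpos _ _ hf (tf_eff heB heC hg hh), hunit⟩
  · rintro ⟨hpos, hunit⟩
    refine ⟨?_, hunit⟩
    intro f G hf hG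
    set w : VB ⊗[ℝ] VC := ctL f z with hw
    rw [tf_ctL]
    have hwpos : ∀ g h, IsEff KB g → IsEff KC h → 0 ≤ tensorFunctional g h w := by
      intro g h hg hh
      rw [hw, ← tf_ctL]
      exact hpos f g h hf hg hh
    set t : ℝ := tensorFunctional eB eC w with ht
    have htpos : 0 ≤ t := hwpos _ _ (isEff_unit heB) (isEff_unit heC)
    rcases eq_or_lt_of_le htpos with hteq | htlt
    · have hall : ∀ g h, IsEff KB g → IsEff KC h → tensorFunctional g h w = 0 := by
        intro g h hg hh
        have h1 : 0 ≤ tensorFunctional g (eC - h) w :=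
          hwpos _ _ hg (isEff_sub heC hh)
        have h2 : 0 ≤ tensorFunctional (eB - g) eC w :=
          hwpos _ _ (isEff_sub heB hg) (isEff_unit heC)
        have h3 : 0 ≤ tensorFunctional g h w := hwpos _ _ hg hh
        rw [tf_sub_right] at h1
        rw [tf_sub_left] at h2
        linarith [hteq.symm ▸ (rfl : t = t)]
      have hw0 : w = 0 := eq_zero_of_eff hcompB hcompC heB heC w hall
      show 0 ≤ G w
      rw [hw0, map_zero]
    · have hmem : t⁻¹ • w ∈ maxTensor KB KC eB eC := by
        constructor
        · intro g h hg hh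
          rw [map_smul, smul_eq_mul]
          exact mul_nonneg (inv_nonneg.mpr htpos) (hwpos g h hg hh)
        · rw [map_smul, smul_eq_mul, ← ht, inv_mul_cancel₀ (ne_of_gt htlt)]
      have h5 := (hG _ hmem).1
      rw [map_smul, smul_eq_mul] at h5
      show 0 ≤ G w
      have h6 : 0 ≤ t * (t⁻¹ * G w) := mul_nonneg htlt.le h5
      rwa [← mul_assoc, mul_inv_cancel₀ (ne_of_gt htlt), one_mul] at h6

lemma tf_assoc {VA VB VC : Type*} [AddCommGroup VA] [Module ℝ VA]
    [AddCommGroup VB] [Module ℝ VB] [AddCommGroup VC] [Module ℝ VC]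
    (f : VA →ₗ[ℝ] ℝ) (g : VB →ₗ[ℝ] ℝ) (h : VC →ₗ[ℝ] ℝ) (z : (VA ⊗[ℝ] VB) ⊗[ℝ] VC) :
    tensorFunctional f (tensorFunctional g h) ((TensorProduct.assoc ℝ VA VB VC) z)
      = tensorFunctional (tensorFunctional f g) h z := by
  have heq : (tensorFunctional f (tensorFunctional g h)) ∘ₗ
      (TensorProduct.assoc ℝ VA VB VC).toLinearMap
      = tensorFunctional (tensorFunctional f g) h := by
    apply TensorProduct.ext_threefold
    intro x y w
    simp [tf_tmul]
    ring
  exact LinearMap.congr_fun heq z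

end MaxAux

open MaxAux in
/-- the maximal tensor product is associative: the canonical associativity
isomorphism maps `(K_A ⊗max K_B) ⊗max K_C` onto `K_A ⊗max (K_B ⊗max K_C)`, where the
iterated maximal tensor products use as effects all linear functionals taking values in
`[0,1]` on the respective maximal tensor product, with unit `e_A ⊗ e_B` resp.
`e_B ⊗ e_C`. -/
theorem maxTensor_assoc
    {VA VB VC : Type*}
    [NormedAddCommGroup VA] [NormedSpace ℝ VA] [FiniteDimensional ℝ VA]
    [NormedAddCommGroup VB] [NormedSpace ℝ VB] [FiniteDimensional ℝ VB]
    [NormedAddCommGroup VC] [NormedSpace ℝ VC] [FiniteDimensional ℝ VC]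
    (KA : Set VA) (KB : Set VB) (KC : Set VC)
    (hneA : KA.Nonempty) (hcompA : IsCompact KA) (hconvA : Convex ℝ KA)
    (hneB : KB.Nonempty) (hcompB : IsCompact KB) (hconvB : Convex ℝ KB)
    (hneC : KC.Nonempty) (hcompC : IsCompact KC) (hconvC : Convex ℝ KC)
    (hspanA : Submodule.span ℝ KA = ⊤) (hspanB : Submodule.span ℝ KB = ⊤)
    (hspanC : Submodule.span ℝ KC = ⊤)
    (eA : VA →ₗ[ℝ] ℝ) (eB : VB →ₗ[ℝ] ℝ) (eC : VC →ₗ[ℝ] ℝ)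
    (heA : ∀ x ∈ KA, eA x = 1) (heB : ∀ y ∈ KB, eB y = 1) (heC : ∀ w ∈ KC, eC w = 1) :
    ⇑(TensorProduct.assoc ℝ VA VB VC) ''
        maxTensor (maxTensor KA KB eA eB) KC (tensorFunctional eA eB) eC
      = maxTensor KA (maxTensor KB KC eB eC) eA (tensorFunctional eB eC) := by
  ext z'
  simp only [Set.mem_image]
  constructor
  · rintro ⟨z, hz, rfl⟩
    obtain ⟨hpos, hunit⟩ := (memL_iff hcompA hcompB heA heB heC z).mp hz
    refine (memR_iff hcompB hcompC heA heB heC _).mpr ⟨?_, ?_⟩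
    · intro f g h hf hg hh
      rw [tf_assoc]
      exact hpos f g h hf hg hh
    · rw [tf_assoc]
      exact hunit
  · intro hz'
    refine ⟨(TensorProduct.assoc ℝ VA VB VC).symm z', ?_,
      (TensorProduct.assoc ℝ VA VB VC).apply_symm_apply z'⟩
    obtain ⟨hpos, hunit⟩ := (memR_iff hcompB hcompC heA heB heC z').mp hz'
    refine (memL_iff hcompA hcompB heA heB heC _).mpr ⟨?_, ?_⟩
    · intro f g h hf hg hh
      rw [← tf_assoc, (TensorProduct.assoc ℝ VA VB VC).apply_symm_apply]
      exact hpos f g h hf hg hh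
    · rw [← tf_assoc, (TensorProduct.assoc ℝ VA VB VC).apply_symm_apply]
      exact hunit
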